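/- Let H be a complex Hilbert space and A a set of orthogonal projections on H. Then A is a Boolean logic — that is, A = A^!! and the lattice operations P ∧ Q (projection onto ran P ∩ ran Q) and P ∨ Q (projection onto the closed span of ran P ∪ ran Q) restricted to A are distributive, so that P ∧ (Q ∨ R) = (P ∧ Q) ∨ (P ∧ R) for all P, Q, R ∈ A — if and only if A = A^!! and A ⊆ A^! (i.e., the elements of A pairwise commute). -/

import Mathlib

set_option linter.unusedSectionVars false
variable {H : Type} [NormedAddCommGroup H] [InnerProductSpace ℂ H] [CompleteSpace H]

/-- `P` is an orthogonal projection on `H`: self-adjoint and idempotent. -/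
def IsOrthProj (P : H →L[ℂ] H) : Prop := IsSelfAdjoint P ∧ P * P = P

/-- The commutant `A^!` of a set `A` of operators, taken inside the set of
orthogonal projections on `H`. -/
def projComm (A : Set (H →L[ℂ] H)) : Set (H →L[ℂ] H) :=
  {P | IsOrthProj P ∧ ∀ Q ∈ A, P * Q = Q * P}

lemma fix_mem_range {P : H →L[ℂ] H} (hP2 : P * P = P) {x : H} :
    x ∈ LinearMap.range (P : H →ₗ[ℂ] H) ↔ P x = x := by
  constructor
  · rintro ⟨y, rfl⟩
    have := DFunLike.congr_fun hP2 y
    simpa [ContinuousLinearMap.mul_apply] using this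
  · intro h; exact ⟨x, h⟩

lemma range_closed {P : H →L[ℂ] H} (hP2 : P * P = P) :
    IsClosed (LinearMap.range (P : H →ₗ[ℂ] H) : Set H) := by
  have : (LinearMap.range (P : H →ₗ[ℂ] H) : Set H) = {x | P x = x} := by
    ext x; simpa using fix_mem_range hP2
  rw [this]
  exact isClosed_eq P.continuous continuous_id

/-- product of commuting orthogonal projections is an orthogonal projection -/
lemma mul_isOrthProj {P Q : H →L[ℂ] H} (hP : IsOrthProj P) (hQ : IsOrthProj Q)
    (h : P * Q = Q * P) : IsOrthProj (P * Q) := by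
  constructor
  · have : star (P * Q) = Q * P := by
      rw [star_mul, hP.1.star_eq, hQ.1.star_eq]
    rw [IsSelfAdjoint, this, h]
  · calc P * Q * (P * Q) = P * (Q * P) * Q := by noncomm_ring
    _ = P * (P * Q) * Q := by rw [h]
    _ = (P * P) * (Q * Q) := by noncomm_ring
    _ = P * Q := by rw [hP.2, hQ.2]

lemma range_mul {P Q : H →L[ℂ] H} (hP : IsOrthProj P) (hQ : IsOrthProj Q)
    (h : P * Q = Q * P) :
    LinearMap.range ((P * Q : H →L[ℂ] H) : H →ₗ[ℂ] H) = LinearMap.range (P : H →ₗ[ℂ] H) ⊓ LinearMap.range (Q : H →ₗ[ℂ] H) := by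
  ext x
  rw [Submodule.mem_inf, fix_mem_range (mul_isOrthProj hP hQ h).2,
    fix_mem_range hP.2, fix_mem_range hQ.2]
  constructor
  · intro hx
    have hx' : P (Q x) = x := hx
    constructor
    · have := DFunLike.congr_fun hP.2 (Q x)
      simp only [ContinuousLinearMap.mul_apply] at this
      rw [hx'] at this
      exact this
    · have := DFunLike.congr_fun (show Q * (P * Q) = P * Q by
        rw [h, ← mul_assoc, hQ.2]) x
      simp only [ContinuousLinearMap.mul_apply] at this
      rw [hx'] at this
      exact this
  · rintro ⟨h1, h2⟩
    show P (Q x) = x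
    rw [h2, h1]

/-- sup formula -/
lemma sup_isOrthProj {P Q : H →L[ℂ] H} (hP : IsOrthProj P) (hQ : IsOrthProj Q)
    (h : P * Q = Q * P) : IsOrthProj (P + Q - P * Q) := by
  constructor
  · have : star (P + Q - P * Q) = P + Q - Q * P := by
      rw [star_sub, star_add, star_mul, hP.1.star_eq, hQ.1.star_eq]
    rw [IsSelfAdjoint, this, h]
  · have hQPQ : Q * (P * Q) = P * Q := by rw [h, ← mul_assoc, hQ.2]
    have hPQP : P * Q * P = P * Q := by rw [mul_assoc, ← h, ← mul_assoc, hP.2]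
    have hPQQ : P * Q * Q = P * Q := by rw [mul_assoc, hQ.2]
    have hPPQ : P * (P * Q) = P * Q := by rw [← mul_assoc, hP.2]
    calc (P + Q - P * Q) * (P + Q - P * Q)
        = P * P + P * Q - P * (P * Q) + (Q * P + Q * Q - Q * (P * Q))
          - (P * Q * P + P * Q * Q - P * Q * (P * Q)) := by noncomm_ring
      _ = P + Q - P * Q := by
          have hPQPQ : P * Q * (P * Q) = P * Q := by
            rw [← mul_assoc, hPQP, hPQQ]
          rw [hP.2, hQ.2, hPPQ, hQPQ, hPQP, hPQQ, hPQPQ, ← h]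
          abel

lemma range_sup {P Q : H →L[ℂ] H} (hP : IsOrthProj P) (hQ : IsOrthProj Q)
    (h : P * Q = Q * P) :
    (LinearMap.range (P : H →ₗ[ℂ] H) ⊔ LinearMap.range (Q : H →ₗ[ℂ] H)).topologicalClosure
      = LinearMap.range ((P + Q - P * Q : H →L[ℂ] H) : H →ₗ[ℂ] H) := by
  have hS := sup_isOrthProj hP hQ h
  apply le_antisymm
  · rw [← IsClosed.submodule_topologicalClosure_eq (range_closed hS.2)]
    apply Submodule.topologicalClosure_mono
    apply sup_le
    · rintro x hx
      rw [fix_mem_range hP.2] at hx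
      rw [fix_mem_range hS.2]
      have hQx : (P * Q) x = Q x := by
        rw [h]; show Q (P x) = Q x; rw [hx]
      simp [ContinuousLinearMap.sub_apply, ContinuousLinearMap.add_apply, hx, hQx]
    · rintro x hx
      rw [fix_mem_range hQ.2] at hx
      rw [fix_mem_range hS.2]
      have hPx : (P * Q) x = P x := by show P (Q x) = P x; rw [hx]
      simp [ContinuousLinearMap.sub_apply, ContinuousLinearMap.add_apply, hx, hPx]
  · rintro _ ⟨x, rfl⟩
    apply Submodule.le_topologicalClosure
    have hh : P (Q x) = Q (P x) := by
      have := DFunLike.congr_fun h x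
      simpa [ContinuousLinearMap.mul_apply] using this
    have : (P + Q - P * Q) x = P x + Q (x - P x) := by
      simp [ContinuousLinearMap.mul_apply, map_sub, hh]; abel
    rw [ContinuousLinearMap.coe_coe, this]
    exact Submodule.add_mem_sup (LinearMap.mem_range_self _ x)
      (LinearMap.mem_range_self _ _)

/-- `A` is a Boolean logic — `A = A^!!` and the lattice operations
`P ∧ Q` (projection onto `ran P ∩ ran Q`) and `P ∨ Q` (projection onto the closed span of
`ran P ∪ ran Q`) are distributive on `A` — if and only if `A = A^!!` and `A ⊆ A^!`
(the elements of `A` pairwise commute). -/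
theorem stmt7 (A : Set (H →L[ℂ] H)) (hA : ∀ P ∈ A, IsOrthProj P) :
    (A = projComm (projComm A) ∧ ∀ P ∈ A, ∀ Q ∈ A, ∀ R ∈ A,
        LinearMap.range (P : H →ₗ[ℂ] H) ⊓ (LinearMap.range (Q : H →ₗ[ℂ] H) ⊔ LinearMap.range (R : H →ₗ[ℂ] H)).topologicalClosure
          = ((LinearMap.range (P : H →ₗ[ℂ] H) ⊓ LinearMap.range (Q : H →ₗ[ℂ] H)) ⊔
              (LinearMap.range (P : H →ₗ[ℂ] H) ⊓ LinearMap.range (R : H →ₗ[ℂ] H))).topologicalClosure)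
      ↔ (A = projComm (projComm A) ∧ A ⊆ projComm A) := by
  constructor
  · rintro ⟨hAA, hdist⟩
    refine ⟨hAA, fun P hPm => ⟨hA P hPm, fun Q hQm => ?_⟩⟩
    have hP := hA P hPm
    have hQ := hA Q hQm
    -- the complement 1 - Q lies in A
    have hRproj : IsOrthProj (1 - Q) := by
      constructor
      · rw [IsSelfAdjoint, star_sub, star_one, hQ.1.star_eq]
      · calc (1 - Q) * (1 - Q) = 1 - Q - Q + Q * Q := by noncomm_ring
          _ = 1 - Q := by rw [hQ.2]; abel
    have hRm : (1 - Q) ∈ A := by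
      rw [hAA]
      refine ⟨hRproj, fun T hT => ?_⟩
      have hTQ : T * Q = Q * T := hT.2 Q hQm
      calc (1 - Q) * T = T - Q * T := by noncomm_ring
        _ = T - T * Q := by rw [hTQ]
        _ = T * (1 - Q) := by noncomm_ring
    have hd := hdist P hPm Q hQm (1 - Q) hRm
    -- range Q ⊔ range (1-Q) = ⊤
    have htop : LinearMap.range (Q : H →ₗ[ℂ] H) ⊔ LinearMap.range ((1 - Q : H →L[ℂ] H) : H →ₗ[ℂ] H) = (⊤ : Submodule ℂ H) := by
      rw [eq_top_iff]
      intro x _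
      refine Submodule.mem_sup.mpr ⟨Q x, ⟨x, rfl⟩, (1 - Q) x, ⟨x, rfl⟩, ?_⟩
      simp
    rw [htop] at hd
    have htop2 : (⊤ : Submodule ℂ H).topologicalClosure = ⊤ :=
      top_le_iff.mp (Submodule.le_topologicalClosure _)
    rw [htop2, inf_top_eq] at hd
    -- Q maps range P into range P
    have hsubQ : ∀ x ∈ LinearMap.range (P : H →ₗ[ℂ] H), Q x ∈ LinearMap.range (P : H →ₗ[ℂ] H) := by
      have hK : IsClosed ((LinearMap.range (P : H →ₗ[ℂ] H)).comap (Q : H →ₗ[ℂ] H) : Set H) := by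
        have : ((LinearMap.range (P : H →ₗ[ℂ] H)).comap (Q : H →ₗ[ℂ] H) : Set H)
            = ⇑Q ⁻¹' (LinearMap.range (P : H →ₗ[ℂ] H) : Set H) := rfl
        rw [this]
        exact (range_closed hP.2).preimage Q.continuous
      have hle : (LinearMap.range (P : H →ₗ[ℂ] H) ⊓ LinearMap.range (Q : H →ₗ[ℂ] H)) ⊔
          (LinearMap.range (P : H →ₗ[ℂ] H) ⊓ LinearMap.range ((1 - Q : H →L[ℂ] H) : H →ₗ[ℂ] H))
            ≤ (LinearMap.range (P : H →ₗ[ℂ] H)).comap (Q : H →ₗ[ℂ] H) := by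
        apply sup_le
        · rintro x ⟨hx1, hx2⟩
          have : Q x = x := (fix_mem_range hQ.2).mp hx2
          simpa [Submodule.mem_comap, this] using hx1
        · rintro x ⟨hx1, hx2⟩
          have hfix : (1 - Q) x = x := (fix_mem_range hRproj.2).mp hx2
          have : Q x = 0 := by
            have : x - Q x = x := by simpa using hfix
            have := congrArg (x - ·) this
            simpa using this
          simp [Submodule.mem_comap, this]
      intro x hx
      rw [hd] at hx
      exact Submodule.topologicalClosure_minimal _ hle hK hx
    have hQP : ∀ x : H, P (Q (P x)) = Q (P x) := fun x =>
      (fix_mem_range hP.2).mp (hsubQ _ (LinearMap.mem_range_self _ x))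
    have e' : P * (Q * P) = Q * P := by
      ext x
      simpa [ContinuousLinearMap.mul_apply] using hQP x
    have estar : star (Q * P) = Q * P := by
      calc star (Q * P) = star (P * (Q * P)) := by rw [e']
        _ = (star P * star Q) * star P := by rw [star_mul, star_mul]
        _ = P * (Q * P) := by rw [hP.1.star_eq, hQ.1.star_eq, mul_assoc]
        _ = Q * P := e'
    have hstar2 : star (Q * P) = P * Q := by
      rw [star_mul, hP.1.star_eq, hQ.1.star_eq]
    rw [← hstar2, estar]
  · rintro ⟨hAA, hsub⟩
    refine ⟨hAA, fun P hPm Q hQm R hRm => ?_⟩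
    have hP := hA P hPm
    have hQ := hA Q hQm
    have hR := hA R hRm
    have hPQ : P * Q = Q * P := (hsub hPm).2 Q hQm
    have hPR : P * R = R * P := (hsub hPm).2 R hRm
    have hQR : Q * R = R * Q := (hsub hQm).2 R hRm
    have hS := sup_isOrthProj hQ hR hQR
    have hPQR : P * (Q * R) = Q * R * P := by
      rw [← mul_assoc, hPQ, mul_assoc, hPR, ← mul_assoc]
    have hPS : P * (Q + R - Q * R) = (Q + R - Q * R) * P := by
      simp only [mul_add, add_mul, mul_sub, sub_mul, hPQ, hPR, hPQR]
    have hkey : P * Q * (P * R) = P * (Q * R) := by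
      calc P * Q * (P * R) = P * (Q * P) * R := by noncomm_ring
        _ = P * (P * Q) * R := by rw [← hPQ]
        _ = (P * P) * (Q * R) := by noncomm_ring
        _ = P * (Q * R) := by rw [hP.2]
    have hkey2 : P * R * (P * Q) = P * (Q * R) := by
      calc P * R * (P * Q) = P * (R * P) * Q := by noncomm_ring
        _ = P * (P * R) * Q := by rw [← hPR]
        _ = (P * P) * (R * Q) := by noncomm_ring
        _ = P * (Q * R) := by rw [hP.2, hQR]
    have h2 : P * Q * (P * R) = P * R * (P * Q) := by rw [hkey, hkey2]
    rw [range_sup hQ hR hQR, ← range_mul hP hS hPS,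
      ← range_mul hP hQ hPQ, ← range_mul hP hR hPR,
      range_sup (mul_isOrthProj hP hQ hPQ) (mul_isOrthProj hP hR hPR) h2]
    congr 1
    rw [hkey]
    noncomm_ring
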